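/- The coalition number of the triangular prism graph C_3 □ K_2 (the 3-prism, a cubic graph on 6 vertices) equals 6; equivalently, the partition of its vertex set into six singletons is a coalition partition. -/
import Mathlib


open Finset

/-- `S` is a dominating set of `G`: every vertex outside `S` has a neighbor in `S`. -/
def Dominates {V : Type*} (G : SimpleGraph V) (S : Finset V) : Prop :=
  ∀ v ∉ S, ∃ u ∈ S, G.Adj u v

/-- Two disjoint non-dominating sets whose union dominates form a coalition. -/
def FormsCoalition {V : Type*} [DecidableEq V] (G : SimpleGraph V) (X Y : Finset V) : Prop :=
  ¬ Dominates G X ∧ ¬ Dominates G Y ∧ Dominates G (X ∪ Y)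

/-- A coalition partition: every class is a singleton dominating set, or is a
non-dominating set forming a coalition with another class. -/
def IsCoalitionPartition {V : Type*} [Fintype V] [DecidableEq V] (G : SimpleGraph V)
    (π : Finpartition (univ : Finset V)) : Prop :=
  ∀ X ∈ π.parts, (X.card = 1 ∧ Dominates G X) ∨
    (¬ Dominates G X ∧ ∃ Y ∈ π.parts, Y ≠ X ∧ ¬ Dominates G Y ∧ Dominates G (X ∪ Y))

/-- The coalition number: the maximum order of a coalition partition. -/
noncomputable def coalitionNumber (V : Type*) [Fintype V] [DecidableEq V]
    (G : SimpleGraph V) : ℕ :=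
  sSup {k | ∃ π : Finpartition (univ : Finset V), IsCoalitionPartition G π ∧ π.parts.card = k}

def prism : SimpleGraph (Fin 6) :=
  SimpleGraph.fromRel (fun a b =>
    (a.val, b.val) ∈ [(0,1),(1,2),(0,2),(3,4),(4,5),(3,5),(0,3),(1,4),(2,5)])

instance : DecidableRel prism.Adj := fun a b =>
  inferInstanceAs (Decidable (a ≠ b ∧ _))

instance {V : Type*} [DecidableEq V] (G : SimpleGraph V) [DecidableRel G.Adj] [Fintype V]
    (S : Finset V) : Decidable (Dominates G S) :=
  inferInstanceAs (Decidable (∀ v ∉ S, ∃ u ∈ S, G.Adj u v))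

lemma prism_bot : IsCoalitionPartition prism ((⊥ : Finpartition (univ : Finset (Fin 6)))) := by
  intro X hX
  rw [Finpartition.mem_bot_iff] at hX
  obtain ⟨a, -, rfl⟩ := hX
  right
  fin_cases a
  · exact ⟨by decide, {5}, Finpartition.mem_bot_iff.mpr ⟨5, mem_univ _, rfl⟩, by decide,
      by decide, by decide⟩
  · exact ⟨by decide, {3}, Finpartition.mem_bot_iff.mpr ⟨3, mem_univ _, rfl⟩, by decide,
      by decide, by decide⟩
  · exact ⟨by decide, {4}, Finpartition.mem_bot_iff.mpr ⟨4, mem_univ _, rfl⟩, by decide,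
      by decide, by decide⟩
  · exact ⟨by decide, {1}, Finpartition.mem_bot_iff.mpr ⟨1, mem_univ _, rfl⟩, by decide,
      by decide, by decide⟩
  · exact ⟨by decide, {2}, Finpartition.mem_bot_iff.mpr ⟨2, mem_univ _, rfl⟩, by decide,
      by decide, by decide⟩
  · exact ⟨by decide, {0}, Finpartition.mem_bot_iff.mpr ⟨0, mem_univ _, rfl⟩, by decide,
      by decide, by decide⟩

theorem stmt6 : coalitionNumber (Fin 6) prism = 6 ∧
    IsCoalitionPartition prism ((⊥ : Finpartition (univ : Finset (Fin 6)))) := by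
  refine ⟨?_, prism_bot⟩
  have h6 : (6 : ℕ) ∈ {k | ∃ π : Finpartition (univ : Finset (Fin 6)),
      IsCoalitionPartition prism π ∧ π.parts.card = k} :=
    ⟨⊥, prism_bot, by simp [Finpartition.card_bot]⟩
  have hub : ∀ k ∈ {k | ∃ π : Finpartition (univ : Finset (Fin 6)),
      IsCoalitionPartition prism π ∧ π.parts.card = k}, k ≤ 6 := by
    rintro k ⟨π, -, rfl⟩
    simpa using π.card_parts_le_card
  exact le_antisymm (csSup_le ⟨6, h6⟩ hub) (le_csSup ⟨6, hub⟩ h6)
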